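/- arXiv:2512.25042 — 8 statements merged into one kernel-verified Lean document; each statement's English description precedes it below -/
import Mathlib

section
/- For any integers n ≥ 2 and 0 ≤ Y ≤ n, one has Σ_{j=0}^{n−Y} (−1)^j · [(n−Y)! / (n−Y−j)!] · [Y! / (Y+j)!] = Y/n. -/
lemma aux (M Y : ℕ) (hY : 1 ≤ Y) : ∀ k, k ≤ M →
    ∑ j ∈ Finset.range (k + 1),
        (-1 : ℚ) ^ j * ((M + 1).factorial : ℚ) / ((M + 1 - j).factorial : ℚ)
          * ((Y.factorial : ℚ) / ((Y + j).factorial : ℚ))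
    = (Y : ℚ) / (Y + M + 1)
      + (-1 : ℚ) ^ k * (M + 1) * (M.factorial : ℚ) / ((M - k).factorial : ℚ)
        * ((Y.factorial : ℚ) / ((Y + k).factorial : ℚ)) / (Y + M + 1) := by
  intro k
  induction k with
  | zero =>
    intro _
    simp [Finset.sum_range_one]
    have h1 : ((Y:ℚ) + M + 1) ≠ 0 := by positivity
    have h2 : ((M.factorial : ℚ)) ≠ 0 := Nat.cast_ne_zero.mpr (Nat.factorial_ne_zero M)
    have h3 : (((M+1).factorial : ℚ)) ≠ 0 := Nat.cast_ne_zero.mpr (Nat.factorial_ne_zero _)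
    have h4 : ((Y.factorial : ℚ)) ≠ 0 := Nat.cast_ne_zero.mpr (Nat.factorial_ne_zero _)
    field_simp
    ring
  | succ k ih =>
    intro hk
    have hk' : k ≤ M := Nat.le_of_succ_le hk
    rw [Finset.sum_range_succ, ih hk']
    have e1 : M + 1 - (k + 1) = M - k := by omega
    have e2 : M - k = (M - (k+1)) + 1 := by omega
    have e3n : (M - k).factorial = (M - k) * (M - (k+1)).factorial := by
      rw [e2, Nat.factorial_succ, ← e2]
    have e3 : ((M - k).factorial : ℚ) = ((M:ℚ) - k) * ((M - (k+1)).factorial : ℚ) := by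
      rw [e3n, Nat.cast_mul, Nat.cast_sub hk']
    have e4 : ((Y + (k+1)).factorial : ℚ) = (Y + k + 1) * ((Y + k).factorial : ℚ) := by
      have : Y + (k + 1) = (Y + k) + 1 := by omega
      rw [this, Nat.factorial_succ]; push_cast; ring
    have e5 : (((M+1).factorial : ℚ)) = (M + 1) * (M.factorial : ℚ) := by
      rw [Nat.factorial_succ]; push_cast; ring
    have hmk : ((M : ℚ) - k) = ((M - k : ℕ) : ℚ) := by
      rw [Nat.cast_sub hk']
    have h1 : ((Y:ℚ) + M + 1) ≠ 0 := by positivity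
    have h2 : ((M.factorial : ℚ)) ≠ 0 := Nat.cast_ne_zero.mpr (Nat.factorial_ne_zero M)
    have h4 : ((Y.factorial : ℚ)) ≠ 0 := Nat.cast_ne_zero.mpr (Nat.factorial_ne_zero _)
    have h5 : (((M - (k+1)).factorial : ℚ)) ≠ 0 := Nat.cast_ne_zero.mpr (Nat.factorial_ne_zero _)
    have h6 : (((Y + k).factorial : ℚ)) ≠ 0 := Nat.cast_ne_zero.mpr (Nat.factorial_ne_zero _)
    have h7 : ((M : ℚ) - k) ≠ 0 := by
      rw [hmk]; exact_mod_cast Nat.sub_ne_zero_of_lt hk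
    have h8 : ((Y:ℚ) + k + 1) ≠ 0 := by positivity
    rw [e1, e3, e4, e5]
    field_simp
    ring


/-- For integers `n ≥ 2` and `0 ≤ Y ≤ n`,
`Σ_{j=0}^{n−Y} (−1)^j · [(n−Y)!/(n−Y−j)!] · [Y!/(Y+j)!] = Y/n`. -/
theorem binomial_comb_identity (n Y : ℕ) (hn : 2 ≤ n) (hY : Y ≤ n) :
    ∑ j ∈ Finset.range (n - Y + 1),
        (-1 : ℚ) ^ j * ((n - Y).factorial : ℚ) / ((n - Y - j).factorial : ℚ)
          * ((Y.factorial : ℚ) / ((Y + j).factorial : ℚ))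
    = (Y : ℚ) / (n : ℚ) := by
  rcases Nat.eq_zero_or_pos Y with hY0 | hY1
  · subst hY0
    simp only [Nat.sub_zero, Nat.cast_zero, zero_div, Nat.zero_add]
    have key : ∀ j ∈ Finset.range (n+1),
        (-1:ℚ)^j * (n.factorial : ℚ) / ((n-j).factorial : ℚ)
          * ((Nat.factorial 0 : ℚ)/(j.factorial : ℚ))
        = (-1:ℚ)^j * (n.choose j : ℚ) := by
      intro j hj
      have hj' : j ≤ n := Nat.lt_succ_iff.mp (Finset.mem_range.mp hj)
      rw [Nat.cast_choose ℚ hj']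
      have h1 : ((j.factorial : ℚ)) ≠ 0 := Nat.cast_ne_zero.mpr (Nat.factorial_ne_zero _)
      have h2 : (((n-j).factorial : ℚ)) ≠ 0 := Nat.cast_ne_zero.mpr (Nat.factorial_ne_zero _)
      simp only [Nat.zero_add, Nat.factorial_zero, Nat.cast_one]
      field_simp
    rw [Finset.sum_congr rfl key]
    have h := Int.alternating_sum_range_choose (n := n)
    rw [if_neg (by omega : n ≠ 0)] at h
    have : ((∑ i ∈ Finset.range (n + 1), (-1:ℤ) ^ i * (n.choose i) : ℤ) : ℚ) = 0 := by
      rw [h]; norm_num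
    push_cast at this
    exact this
  · by_cases hYn : Y = n
    · subst hYn
      simp only [Nat.sub_self, Nat.zero_add, Finset.sum_range_one, Nat.add_zero, pow_zero,
        Nat.factorial_zero, Nat.cast_one]
      have h4 : ((Y.factorial : ℚ)) ≠ 0 := Nat.cast_ne_zero.mpr (Nat.factorial_ne_zero _)
      have hn0 : (Y:ℚ) ≠ 0 := by positivity
      field_simp
    · obtain ⟨M, hM⟩ : ∃ M, n - Y = M + 1 := ⟨n - Y - 1, by omega⟩
      have hnc : (n:ℚ) = (Y:ℚ) + M + 1 := by
        have : n = Y + M + 1 := by omega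
        rw [this]; push_cast; ring
      rw [hM, Finset.sum_range_succ, aux M Y hY1 M le_rfl, hnc]
      have e4 : ((Y + (M+1)).factorial : ℚ) = ((Y:ℚ) + M + 1) * ((Y + M).factorial : ℚ) := by
        have : Y + (M + 1) = (Y + M) + 1 := by omega
        rw [this, Nat.factorial_succ]; push_cast; ring
      have e5 : (((M+1).factorial : ℚ)) = ((M:ℚ) + 1) * (M.factorial : ℚ) := by
        rw [Nat.factorial_succ]; push_cast; ring
      simp only [Nat.sub_self, Nat.add_sub_cancel, Nat.factorial_zero, Nat.cast_one, e4, e5]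
      have h1 : ((Y:ℚ) + M + 1) ≠ 0 := by positivity
      have h2 : ((M.factorial : ℚ)) ≠ 0 := Nat.cast_ne_zero.mpr (Nat.factorial_ne_zero M)
      have h4 : ((Y.factorial : ℚ)) ≠ 0 := Nat.cast_ne_zero.mpr (Nat.factorial_ne_zero _)
      have h6 : (((Y + M).factorial : ℚ)) ≠ 0 := Nat.cast_ne_zero.mpr (Nat.factorial_ne_zero _)
      field_simp
      ring
end

section
/- For any integers n ≥ 2 and 0 ≤ Y ≤ n, one has Σ_{j=0}^{n−Y} (j/n)·(−1)^j · [(n−Y)! / (n−Y−j)!] · [Y! / (Y+j)!] = − Y(n−Y) / (n²(n−1)). -/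
set_option maxHeartbeats 1600000

private lemma binom_tele_aux (m Y : ℕ) (hn : 2 ≤ Y + m) :
    ∑ j ∈ Finset.range (m + 1),
        (j : ℚ) * (-1 : ℚ) ^ j * ((m.factorial : ℚ) / ((m - j).factorial : ℚ))
          * ((Y.factorial : ℚ) / ((Y + j).factorial : ℚ))
    = - ((Y : ℚ) * (m : ℚ)) / (((Y : ℚ) + m) * ((Y : ℚ) + m - 1)) := by
  set N : ℚ := (Y : ℚ) + m with hN
  have hN2 : (2 : ℚ) ≤ N := by rw [hN]; exact_mod_cast hn
  have hN0 : N ≠ 0 := by intro h; rw [h] at hN2; norm_num at hN2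
  have hN1 : N - 1 ≠ 0 := by intro h; nlinarith
  set A : ℚ := -1 / (N - 1) with hA
  set B : ℚ := (A * (1 - 2 * (m : ℚ)) - ((Y : ℚ) + 1)) / N with hB
  set C : ℚ := (Y : ℚ) * (m : ℚ) / (N * (N - 1)) with hC
  set Q : ℚ → ℚ := fun x => A * x ^ 2 + B * x + C with hQdef
  set T : ℕ → ℚ := fun j =>
    (-1 : ℚ) ^ j * Q (j : ℚ) * ((m.factorial : ℚ) / ((m - j).factorial : ℚ))
      * ((Y.factorial : ℚ) / ((Y + j).factorial : ℚ)) with hT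
  have hscal : ∀ x : ℚ, (x + Q x) * ((Y : ℚ) + x + 1) + Q (x + 1) * ((m : ℚ) - x) = 0 := by
    intro x
    rw [hQdef]
    simp only
    rw [hB, hA, hC, hN]
    have h0 : ((Y : ℚ) + m) ≠ 0 := hN0
    have h1 : ((Y : ℚ) + m) - 1 ≠ 0 := hN1
    field_simp
    ring
  have key : ∀ j ∈ Finset.range m,
      (j : ℚ) * (-1 : ℚ) ^ j * ((m.factorial : ℚ) / ((m - j).factorial : ℚ))
        * ((Y.factorial : ℚ) / ((Y + j).factorial : ℚ)) = T (j + 1) - T j := by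
    intro j hj
    rw [Finset.mem_range] at hj
    have hj1 : j + 1 ≤ m := hj
    have h1 : m - j = (m - (j + 1)) + 1 := by omega
    have h2 : Y + (j + 1) = (Y + j) + 1 := by omega
    have e1 : ((m - (j + 1) : ℕ) : ℚ) = (m : ℚ) - j - 1 := by
      push_cast [Nat.cast_sub hj1]; ring
    have hf1 : (((m - (j + 1)).factorial : ℕ) : ℚ) ≠ 0 := by positivity
    have hf2 : (((Y + j).factorial : ℕ) : ℚ) ≠ 0 := by positivity
    have hmj : (m : ℚ) - j ≠ 0 := by
      have : (j : ℚ) < m := by exact_mod_cast hj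
      intro h; nlinarith
    have hyj : (Y : ℚ) + j + 1 ≠ 0 := by positivity
    have expand :
        (j : ℚ) * (-1 : ℚ) ^ j * ((m.factorial : ℚ) / ((m - j).factorial : ℚ))
            * ((Y.factorial : ℚ) / ((Y + j).factorial : ℚ)) - (T (j + 1) - T j)
        = ((-1 : ℚ) ^ j * (m.factorial : ℚ) * (Y.factorial : ℚ) /
            (((m : ℚ) - j) * (((m - (j + 1)).factorial : ℕ) : ℚ) * ((Y : ℚ) + j + 1)
              * (((Y + j).factorial : ℕ) : ℚ)))
          * (((j : ℚ) + Q (j : ℚ)) * ((Y : ℚ) + (j : ℚ) + 1) + Q ((j : ℚ) + 1) * ((m : ℚ) - (j : ℚ))) := by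
      rw [hT]
      simp only [h1, h2, Nat.factorial_succ]
      push_cast [e1]
      have hmj' : (m : ℚ) - j - 1 + 1 ≠ 0 := by rw [sub_add_cancel]; exact hmj
      field_simp
      ring
    rw [hscal (j : ℚ), mul_zero] at expand
    linarith
  have hQm : Q (m : ℚ) = -(m : ℚ) := by
    rw [hQdef]
    simp only
    rw [hB, hA, hC, hN]
    have h0 : ((Y : ℚ) + m) ≠ 0 := hN0
    have h1 : ((Y : ℚ) + m) - 1 ≠ 0 := hN1
    field_simp
    ring
  have hT0 : T 0 = C := by
    have hmf : (m.factorial : ℚ) ≠ 0 := by positivity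
    have hyf : (Y.factorial : ℚ) ≠ 0 := by positivity
    rw [hT, hQdef]
    norm_num [div_self hmf, div_self hyf]
  rw [Finset.sum_range_succ, Finset.sum_congr rfl key, Finset.sum_range_sub]
  have hTm : T m = -((m : ℚ) * (-1 : ℚ) ^ m * ((m.factorial : ℚ) / ((m - m).factorial : ℚ))
      * ((Y.factorial : ℚ) / ((Y + m).factorial : ℚ))) := by
    rw [hT]
    simp only [hQm, Nat.sub_self, Nat.factorial_zero]
    ring
  rw [hTm, hT0, hC, hN]
  ring

/-- For integers `n ≥ 2` and `0 ≤ Y ≤ n`,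
`Σ_{j=0}^{n−Y} (j/n)·(−1)^j · [(n−Y)!/(n−Y−j)!] · [Y!/(Y+j)!] = −Y(n−Y)/(n²(n−1))`. -/
theorem binomial_comb_identity_two (n Y : ℕ) (hn : 2 ≤ n) (hY : Y ≤ n) :
    ∑ j ∈ Finset.range (n - Y + 1),
        ((j : ℚ) / (n : ℚ)) * (-1 : ℚ) ^ j
          * (((n - Y).factorial : ℚ) / ((n - Y - j).factorial : ℚ))
          * ((Y.factorial : ℚ) / ((Y + j).factorial : ℚ))
    = - ((Y : ℚ) * ((n : ℚ) - (Y : ℚ))) / ((n : ℚ) ^ 2 * ((n : ℚ) - 1)) := by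
  set m := n - Y with hm
  have hYm : Y + m = n := by omega
  have hn2 : 2 ≤ Y + m := by omega
  have haux := binom_tele_aux m Y hn2
  have hrw : ∑ j ∈ Finset.range (m + 1),
        ((j : ℚ) / (n : ℚ)) * (-1 : ℚ) ^ j
          * ((m.factorial : ℚ) / ((m - j).factorial : ℚ))
          * ((Y.factorial : ℚ) / ((Y + j).factorial : ℚ))
      = (n : ℚ)⁻¹ * ∑ j ∈ Finset.range (m + 1),
          (j : ℚ) * (-1 : ℚ) ^ j * ((m.factorial : ℚ) / ((m - j).factorial : ℚ))
            * ((Y.factorial : ℚ) / ((Y + j).factorial : ℚ)) := by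
    rw [Finset.mul_sum]
    exact Finset.sum_congr rfl (fun j _ => by ring)
  rw [hrw, haux]
  have hcastm : (m : ℚ) = (n : ℚ) - Y := by
    rw [hm]; exact Nat.cast_sub hY
  have hcastn : (Y : ℚ) + m = (n : ℚ) := by
    exact_mod_cast congrArg (Nat.cast : ℕ → ℚ) hYm
  rw [hcastn, hcastm]
  have hn0 : (n : ℚ) ≠ 0 := by positivity
  have hn1 : (n : ℚ) - 1 ≠ 0 := by
    have : (2 : ℚ) ≤ (n : ℚ) := by exact_mod_cast hn
    intro h; nlinarith
  rw [inv_mul_eq_div, div_div]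
  congr 1
  ring
end

section
/- Let Y ~ Bin(n, θ) with n ≥ 1 and θ ∈ [0,1], and let h : {0,…,n} → ℝ. Define T₁h(y) := 1{y > 0} · Σ_{j=0}^{n−y} h(y+j)·(−1)^j · [(n−y)!/(n−y−j)!]·[y!/(y+j)!]. Then θ·E[h(Y)] − E[T₁h(Y)] = θ(1−θ)^n · Δh, where Δh := Σ_{j=0}^{n} h(j)(−1)^j C(n,j). -/
/-- Binomial expectation of `f` under `Bin(n, θ)`. -/
noncomputable def binomExp (n : ℕ) (θ : ℝ) (f : ℕ → ℝ) : ℝ :=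
  ∑ k ∈ Finset.range (n + 1), f k * (n.choose k : ℝ) * θ ^ k * (1 - θ) ^ (n - k)

/-- The transform `T₁h(y) = 1{y>0}·Σ_{j=0}^{n−y} h(y+j)(−1)^j [(n−y)!/(n−y−j)!][y!/(y+j)!]`. -/
noncomputable def T1 (n : ℕ) (h : ℕ → ℝ) (y : ℕ) : ℝ :=
  if 0 < y then
    ∑ j ∈ Finset.range (n - y + 1),
      h (y + j) * (-1 : ℝ) ^ j * (((n - y).factorial : ℝ) / ((n - y - j).factorial : ℝ))
        * ((y.factorial : ℝ) / ((y + j).factorial : ℝ))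
  else 0

/-- Alternating binomial sum `Δh = Σ_{j=0}^{n} h(j)(−1)^j C(n,j)`. -/
noncomputable def deltaH (n : ℕ) (h : ℕ → ℝ) : ℝ :=
  ∑ j ∈ Finset.range (n + 1), h j * (-1 : ℝ) ^ j * (n.choose j : ℝ)

lemma factorial_identity (n y j : ℕ) (hle : y + j ≤ n) :
    (n.choose y : ℝ) * (((n - y).factorial : ℝ) / ((n - y - j).factorial : ℝ))
      * ((y.factorial : ℝ) / ((y + j).factorial : ℝ)) = (n.choose (y + j) : ℝ) := by
  have hy : y ≤ n := le_trans (Nat.le_add_right _ _) hle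
  have h1 : n.choose y * y.factorial * (n - y).factorial = n.factorial :=
    Nat.choose_mul_factorial_mul_factorial hy
  have h2 : n.choose (y+j) * (y+j).factorial * (n - (y+j)).factorial = n.factorial :=
    Nat.choose_mul_factorial_mul_factorial hle
  have h3 : n - y - j = n - (y + j) := by omega
  rw [h3]
  have f1 : ((n - (y+j)).factorial : ℝ) ≠ 0 := Nat.cast_ne_zero.2 (Nat.factorial_ne_zero _)
  have f2 : ((y+j).factorial : ℝ) ≠ 0 := Nat.cast_ne_zero.2 (Nat.factorial_ne_zero _)
  have hcast : ((n.choose y * y.factorial * (n - y).factorial : ℕ) : ℝ)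
      = ((n.choose (y+j) * (y+j).factorial * (n - (y+j)).factorial : ℕ) : ℝ) := by
    rw [h1, h2]
  push_cast at hcast
  field_simp
  linarith [hcast]

lemma telescope (n : ℕ) (θ : ℝ) : ∀ k, k ≤ n →
    ∑ y ∈ Finset.Icc 1 k, (-1:ℝ)^(k-y) * θ^y * (1-θ)^(n-y)
      = θ^(k+1) * (1-θ)^(n-k) - (-1)^k * θ * (1-θ)^n := by
  intro k
  induction k with
  | zero => intro _; simp
  | succ k ih =>
    intro hk
    have hk' : k ≤ n := by omega
    rw [Finset.sum_Icc_succ_top (by omega : 1 ≤ k+1)]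
    have e0 : ∑ y ∈ Finset.Icc 1 k, (-1:ℝ)^(k+1-y) * θ^y * (1-θ)^(n-y)
        = -∑ y ∈ Finset.Icc 1 k, (-1:ℝ)^(k-y) * θ^y * (1-θ)^(n-y) := by
      rw [← Finset.sum_neg_distrib]
      apply Finset.sum_congr rfl
      intro y hy
      have hyk : y ≤ k := by simp [Finset.mem_Icc] at hy; omega
      have : k + 1 - y = (k - y) + 1 := by omega
      rw [this, pow_succ]; ring
    rw [e0, ih hk']
    have e1 : n - k = (n - (k+1)) + 1 := by omega
    have e2 : k + 1 - (k+1) = 0 := by omega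
    rw [e1, e2]
    ring_nf

lemma triangle_reindex (n : ℕ) (g : ℕ → ℕ → ℝ) :
    ∑ y ∈ Finset.range (n+1), ∑ j ∈ Finset.range (n - y + 1), g y (y + j)
      = ∑ k ∈ Finset.range (n+1), ∑ y ∈ Finset.range (k+1), g y k := by
  rw [Finset.sum_sigma', Finset.sum_sigma']
  apply Finset.sum_nbij' (i := fun p => (⟨p.1 + p.2, p.1⟩ : Σ _ : ℕ, ℕ))
    (j := fun p => (⟨p.2, p.1 - p.2⟩ : Σ _ : ℕ, ℕ))
  · intro a ha
    simp [Finset.mem_sigma, Finset.mem_range] at ha ⊢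
    omega
  · intro a ha
    simp [Finset.mem_sigma, Finset.mem_range] at ha ⊢
    omega
  · intro a ha
    simp
  · rintro ⟨k, y⟩ ha
    simp [Finset.mem_sigma, Finset.mem_range] at ha
    have : y + (k - y) = k := by omega
    simp [this]
  · intro a ha
    simp

/-- Bias of the `T₁` transform: `θ·E[h(Y)] − E[T₁h(Y)] = θ(1−θ)^n·Δh`. -/
theorem T1_bias (n : ℕ) (hn : 1 ≤ n) (θ : ℝ) (hθ : θ ∈ Set.Icc (0 : ℝ) 1) (h : ℕ → ℝ) :
    θ * binomExp n θ h - binomExp n θ (T1 n h) = θ * (1 - θ) ^ n * deltaH n h := by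
  set g : ℕ → ℕ → ℝ := fun y k =>
    if 0 < y then h k * (-1:ℝ)^(k-y) * (n.choose k : ℝ) * θ^y * (1-θ)^(n-y) else 0 with hg
  have step1 : binomExp n θ (T1 n h)
      = ∑ y ∈ Finset.range (n+1), ∑ j ∈ Finset.range (n - y + 1), g y (y + j) := by
    unfold binomExp
    apply Finset.sum_congr rfl
    intro y hy
    have hyn : y ≤ n := by simp [Finset.mem_range] at hy; omega
    rcases Nat.eq_zero_or_pos y with h0 | hpos
    · subst h0
      simp [T1, hg]
    · rw [T1, if_pos hpos, Finset.sum_mul, Finset.sum_mul, Finset.sum_mul]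
      apply Finset.sum_congr rfl
      intro j hj
      have hjle : y + j ≤ n := by simp [Finset.mem_range] at hj; omega
      have key := factorial_identity n y j hjle
      simp only [hg, if_pos hpos]
      have e : y + j - y = j := by omega
      rw [e]
      calc h (y + j) * (-1:ℝ)^j * (((n - y).factorial : ℝ) / ((n - y - j).factorial : ℝ))
            * ((y.factorial : ℝ) / ((y + j).factorial : ℝ)) * (n.choose y : ℝ) * θ^y * (1-θ)^(n-y)
          = h (y + j) * (-1:ℝ)^j *
            ((n.choose y : ℝ) * (((n - y).factorial : ℝ) / ((n - y - j).factorial : ℝ))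
              * ((y.factorial : ℝ) / ((y + j).factorial : ℝ))) * θ^y * (1-θ)^(n-y) := by ring
        _ = h (y + j) * (-1:ℝ)^j * (n.choose (y+j) : ℝ) * θ^y * (1-θ)^(n-y) := by rw [key]
  have step2 : binomExp n θ (T1 n h)
      = ∑ k ∈ Finset.range (n+1), h k * (n.choose k : ℝ)
          * (θ^(k+1) * (1-θ)^(n-k) - (-1:ℝ)^k * θ * (1-θ)^n) := by
    rw [step1, triangle_reindex]
    apply Finset.sum_congr rfl
    intro k hk
    have hkn : k ≤ n := by simp [Finset.mem_range] at hk; omega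
    have efil : (Finset.range (k+1)).filter (fun y => 0 < y) = Finset.Icc 1 k := by
      ext y; simp [Finset.mem_filter, Finset.mem_range, Finset.mem_Icc]; omega
    calc ∑ y ∈ Finset.range (k+1), g y k
        = ∑ y ∈ (Finset.range (k+1)).filter (fun y => 0 < y),
            h k * (-1:ℝ)^(k-y) * (n.choose k : ℝ) * θ^y * (1-θ)^(n-y) := by
          rw [Finset.sum_filter]
      _ = ∑ y ∈ Finset.Icc 1 k, h k * (-1:ℝ)^(k-y) * (n.choose k : ℝ) * θ^y * (1-θ)^(n-y) := by
          rw [efil]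
      _ = h k * (n.choose k : ℝ) * ∑ y ∈ Finset.Icc 1 k, (-1:ℝ)^(k-y) * θ^y * (1-θ)^(n-y) := by
          rw [Finset.mul_sum]; apply Finset.sum_congr rfl; intro y _; ring
      _ = h k * (n.choose k : ℝ) * (θ^(k+1) * (1-θ)^(n-k) - (-1:ℝ)^k * θ * (1-θ)^n) := by
          rw [telescope n θ k hkn]
  rw [step2]
  unfold binomExp deltaH
  rw [Finset.mul_sum, Finset.mul_sum, ← Finset.sum_sub_distrib]
  apply Finset.sum_congr rfl
  intro k _
  rw [pow_succ]
  ring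
end

section
/- Let Y ~ Bin(n, θ) with n ≥ 2 and θ ∈ [0,1], and let h : {0,…,n} → ℝ be the restriction of a polynomial of degree strictly less than n. Then θ·E[h(Y)] = E[ 1{Y > 0} · Σ_{j=0}^{n−Y} h(Y+j)·(−1)^j · [(n−Y)!/(n−Y−j)!]·[Y!/(Y+j)!] ]. That is, the displayed statistic is an unbiased estimator of θ·E[h(Y)]. -/
lemma pascal_alt (n : ℕ) (f : ℕ → ℝ) :
    ∑ k ∈ Finset.range (n + 2), (-1 : ℝ) ^ k * ((n + 1).choose k) * f k
      = ∑ k ∈ Finset.range (n + 1), (-1 : ℝ) ^ k * (n.choose k) * (f k - f (k + 1)) := by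
  have h1 : ∑ k ∈ Finset.range (n + 2), (-1 : ℝ) ^ k * ((n + 1).choose k) * f k
      = (∑ i ∈ Finset.range (n + 1), (-1 : ℝ) ^ (i+1) * ((n + 1).choose (i+1)) * f (i+1))
        + (-1 : ℝ) ^ 0 * ((n + 1).choose 0) * f 0 :=
    Finset.sum_range_succ' _ _
  have h2 : ∑ j ∈ Finset.range (n + 2), (-1 : ℝ) ^ j * (n.choose j) * f j
      = (∑ i ∈ Finset.range (n + 1), (-1 : ℝ) ^ (i+1) * (n.choose (i+1)) * f (i+1))
        + (-1 : ℝ) ^ 0 * (n.choose 0) * f 0 :=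
    Finset.sum_range_succ' _ _
  have h3 : ∑ j ∈ Finset.range (n + 2), (-1 : ℝ) ^ j * (n.choose j) * f j
      = ∑ j ∈ Finset.range (n + 1), (-1 : ℝ) ^ j * (n.choose j) * f j := by
    rw [Finset.sum_range_succ, Nat.choose_succ_self]
    simp
  have h4 : ∀ i, ((n + 1).choose (i+1) : ℝ) = (n.choose i : ℝ) + (n.choose (i+1) : ℝ) := by
    intro i
    rw [Nat.choose_succ_succ]
    push_cast; ring
  rw [h1]
  have h5 : (∑ i ∈ Finset.range (n + 1), (-1 : ℝ) ^ (i+1) * ((n + 1).choose (i+1)) * f (i+1))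
      = (∑ i ∈ Finset.range (n + 1), (-1 : ℝ) ^ (i+1) * (n.choose i) * f (i+1))
        + (∑ i ∈ Finset.range (n + 1), (-1 : ℝ) ^ (i+1) * (n.choose (i+1)) * f (i+1)) := by
    rw [← Finset.sum_add_distrib]
    refine Finset.sum_congr rfl fun i _ => ?_
    rw [h4]; ring
  rw [h5]
  have h6 : (∑ i ∈ Finset.range (n + 1), (-1 : ℝ) ^ (i+1) * (n.choose (i+1)) * f (i+1))
      = ∑ j ∈ Finset.range (n + 1), (-1 : ℝ) ^ j * (n.choose j) * f j
        - (-1 : ℝ) ^ 0 * (n.choose 0) * f 0 := by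
    rw [← h3, h2]; ring
  rw [h6]
  have h7 : ∀ (A S c : ℝ), A + (S - c) + c = A + S := by intros; ring
  simp only [pow_zero, Nat.choose_zero_right, Nat.cast_one, one_mul]
  rw [h7]
  rw [← Finset.sum_add_distrib]
  refine Finset.sum_congr rfl fun i _ => ?_
  ring

lemma pow_succ_sub (r k : ℕ) :
    (k : ℝ) ^ r - ((k : ℝ) + 1) ^ r = ∑ s ∈ Finset.range r, -((r.choose s : ℝ) * (k : ℝ) ^ s) := by
  have := add_pow (k : ℝ) 1 r
  simp only [one_pow, mul_one] at this
  rw [this, Finset.sum_range_succ]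
  simp only [Nat.choose_self, Nat.cast_one, mul_one]
  have h2 : (k:ℝ)^r - (∑ x ∈ Finset.range r, (k:ℝ)^x * (r.choose x : ℝ) + (k:ℝ)^r)
      = ∑ x ∈ Finset.range r, -((k:ℝ)^x * (r.choose x : ℝ)) := by
    rw [Finset.sum_neg_distrib]; ring
  rw [h2]
  exact Finset.sum_congr rfl fun s _ => by ring

lemma alt_sum_poly : ∀ (n : ℕ) (w : ℕ → ℝ),
    ∑ k ∈ Finset.range (n + 1),
      (-1 : ℝ) ^ k * (n.choose k) * (∑ r ∈ Finset.range n, w r * (k : ℝ) ^ r) = 0 := by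
  intro n
  induction n with
  | zero => intro w; simp
  | succ n ih =>
    intro w
    set f : ℕ → ℝ := fun k => ∑ r ∈ Finset.range (n + 1), w r * (k : ℝ) ^ r with hf
    set w' : ℕ → ℝ := fun s =>
      ∑ r ∈ Finset.range (n + 1), (if s < r then -(w r * (r.choose s : ℝ)) else 0) with hw'
    have key : ∀ k : ℕ, f k - f (k + 1) = ∑ s ∈ Finset.range n, w' s * (k : ℝ) ^ s := by
      intro k
      have hstep : f k - f (k + 1)
          = ∑ r ∈ Finset.range (n + 1), w r * ((k : ℝ) ^ r - ((k : ℝ) + 1) ^ r) := by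
        rw [hf]
        push_cast
        rw [← Finset.sum_sub_distrib]
        exact Finset.sum_congr rfl fun r _ => by ring
      rw [hstep]
      have h1 : ∀ r ∈ Finset.range (n + 1),
          w r * ((k : ℝ) ^ r - ((k : ℝ) + 1) ^ r)
            = ∑ s ∈ Finset.range n, (if s < r then -(w r * (r.choose s : ℝ)) else 0) * (k : ℝ) ^ s := by
        intro r hr
        simp only [Finset.mem_range] at hr
        rw [pow_succ_sub, Finset.mul_sum]
        have hfil : (Finset.range n).filter (fun s => s < r) = Finset.range r := by
          ext a
          simp only [Finset.mem_filter, Finset.mem_range]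
          omega
        rw [← hfil, Finset.sum_filter]
        refine Finset.sum_congr rfl fun s _ => ?_
        split <;> ring
      rw [Finset.sum_congr rfl h1, Finset.sum_comm]
      refine Finset.sum_congr rfl fun s _ => ?_
      rw [hw', Finset.sum_mul]
    calc ∑ k ∈ Finset.range (n + 1 + 1), (-1 : ℝ) ^ k * ((n+1).choose k) * f k
        = ∑ k ∈ Finset.range (n + 1), (-1 : ℝ) ^ k * (n.choose k) * (f k - f (k + 1)) :=
          pascal_alt n f
      _ = ∑ k ∈ Finset.range (n + 1), (-1 : ℝ) ^ k * (n.choose k)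
            * (∑ s ∈ Finset.range n, w' s * (k : ℝ) ^ s) :=
          Finset.sum_congr rfl fun k _ => by rw [key k]
      _ = 0 := ih w'

lemma choose_frac (n y j : ℕ) (hk : y + j ≤ n) :
    (n.choose y : ℝ) * (((n - y).factorial : ℝ) / ((n - (y + j)).factorial : ℝ))
      * ((y.factorial : ℝ) / ((y + j).factorial : ℝ)) = (n.choose (y + j) : ℝ) := by
  have hy : y ≤ n := by omega
  have e1 : (n.choose y : ℝ) * (y.factorial : ℝ) * ((n - y).factorial : ℝ) = (n.factorial : ℝ) := by
    exact_mod_cast congrArg (Nat.cast (R := ℝ)) (Nat.choose_mul_factorial_mul_factorial hy)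
  have e2 : (n.choose (y + j) : ℝ) * ((y + j).factorial : ℝ) * ((n - (y + j)).factorial : ℝ)
      = (n.factorial : ℝ) := by
    exact_mod_cast congrArg (Nat.cast (R := ℝ)) (Nat.choose_mul_factorial_mul_factorial hk)
  have f1 : ((n - (y + j)).factorial : ℝ) ≠ 0 := Nat.cast_ne_zero.2 (Nat.factorial_ne_zero _)
  have f2 : (((y + j)).factorial : ℝ) ≠ 0 := Nat.cast_ne_zero.2 (Nat.factorial_ne_zero _)
  field_simp
  linear_combination e1 - e2

lemma geom_aux (θ : ℝ) (k : ℕ) :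
    ∑ y ∈ Finset.range (k + 1), θ ^ y * (θ - 1) ^ (k - y)
      = θ ^ (k + 1) - (θ - 1) ^ (k + 1) := by
  have h := geom_sum₂_mul θ (θ - 1) (k + 1)
  simp only [Nat.add_sub_cancel] at h
  rw [sub_sub_cancel, mul_one] at h
  exact h

/-- If `h` is (the restriction of) a polynomial of degree `< n`, then `T₁h(Y)` is
an unbiased estimator of `θ·E[h(Y)]`. -/
theorem T1_unbiased_of_poly (n : ℕ) (hn : 2 ≤ n) (θ : ℝ) (hθ : θ ∈ Set.Icc (0 : ℝ) 1)
    (h : ℕ → ℝ) (w : ℕ → ℝ)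
    (hh : ∀ j ≤ n, h j = ∑ r ∈ Finset.range n, w r * (j : ℝ) ^ r) :
    θ * binomExp n θ h = binomExp n θ (T1 n h) := by
  set G : ℕ → ℕ → ℝ := fun y k =>
    h k * (n.choose k : ℝ) * (1 - θ) ^ (n - k) * (θ ^ y * (θ - 1) ^ (k - y)) with hG
  -- Step 1: rewrite RHS as a k-indexed sum
  have hRHS : binomExp n θ (T1 n h)
      = ∑ k ∈ Finset.range (n + 1), h k * (n.choose k : ℝ) * (1 - θ) ^ (n - k)
          * (θ ^ (k + 1) - (θ - 1) ^ (k + 1) - (θ - 1) ^ k) := by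
    rw [binomExp]
    have step1 : ∀ y ∈ Finset.range (n + 1),
        T1 n h y * (n.choose y : ℝ) * θ ^ y * (1 - θ) ^ (n - y)
          = ∑ k ∈ Finset.range (n + 1), (if 1 ≤ y ∧ y ≤ k then G y k else 0) := by
      intro y hy
      simp only [Finset.mem_range] at hy
      rcases Nat.eq_zero_or_pos y with rfl | h1
      · rw [T1]; simp
      · have hcond : ∀ k, (if 1 ≤ y ∧ y ≤ k then G y k else 0)
            = (if y ≤ k then G y k else 0) := fun k => by
          have : (1 ≤ y ∧ y ≤ k) ↔ (y ≤ k) := by omega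
          rw [if_congr this rfl rfl]
        rw [T1, if_pos h1, Finset.sum_mul, Finset.sum_mul, Finset.sum_mul]
        simp only [hcond]
        rw [← Finset.sum_filter]
        have hset : (Finset.range (n + 1)).filter (fun k => y ≤ k)
            = (Finset.range (n - y + 1)).map ⟨fun j => y + j, add_right_injective y⟩ := by
          ext a
          simp only [Finset.mem_filter, Finset.mem_range, Finset.mem_map,
            Function.Embedding.coeFn_mk]
          constructor
          · rintro ⟨ha, hya⟩; exact ⟨a - y, by omega, by omega⟩
          · rintro ⟨b, hb, rfl⟩; exact ⟨by omega, by omega⟩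
        rw [hset, Finset.sum_map]
        refine Finset.sum_congr rfl fun j hj => ?_
        simp only [Function.Embedding.coeFn_mk, Finset.mem_range] at hj ⊢
        have hk : y + j ≤ n := by omega
        have hsub1 : n - y - j = n - (y + j) := by omega
        have hsub2 : (y + j) - y = j := by omega
        have hpow : (1 - θ) ^ (n - y) = (1 - θ) ^ j * (1 - θ) ^ (n - (y + j)) := by
          rw [← pow_add]; congr 1; omega
        have hsign : (θ - 1 : ℝ) ^ j = (-1 : ℝ) ^ j * (1 - θ) ^ j := by
          rw [← mul_pow]; congr 1; ring
        rw [hG]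
        simp only
        rw [hsub1, hsub2, ← choose_frac n y j hk, hpow, hsign]
        ring
    rw [Finset.sum_congr rfl step1, Finset.sum_comm]
    refine Finset.sum_congr rfl fun k hk => ?_
    simp only [Finset.mem_range] at hk
    have hkn : k ≤ n := by omega
    have hsub : ∑ y ∈ Finset.range (n + 1), (if 1 ≤ y ∧ y ≤ k then G y k else 0)
        = ∑ y ∈ Finset.range (k + 1), (if 1 ≤ y ∧ y ≤ k then G y k else 0) := by
      refine (Finset.sum_subset (Finset.range_subset_range.2 (by omega)) ?_).symm
      intro x hx hnx
      simp only [Finset.mem_range] at hx hnx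
      rw [if_neg (by omega)]
    rw [hsub]
    have hterm : ∀ y ∈ Finset.range (k + 1), (if 1 ≤ y ∧ y ≤ k then G y k else 0)
        = G y k - (if y = 0 then G y k else 0) := by
      intro y hy
      simp only [Finset.mem_range] at hy
      rcases Nat.eq_zero_or_pos y with rfl | h1
      · simp
      · rw [if_pos ⟨h1, by omega⟩, if_neg (by omega)]; ring
    rw [Finset.sum_congr rfl hterm, Finset.sum_sub_distrib]
    have hz : ∑ y ∈ Finset.range (k + 1), (if y = 0 then G y k else 0) = G 0 k := by
      simp
    rw [hz]
    have hmain : ∑ y ∈ Finset.range (k + 1), G y k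
        = h k * (n.choose k : ℝ) * (1 - θ) ^ (n - k)
            * (θ ^ (k + 1) - (θ - 1) ^ (k + 1)) := by
      rw [hG]
      simp only
      rw [← Finset.mul_sum, geom_aux]
    rw [hmain, hG]
    simp only [pow_zero, one_mul, Nat.sub_zero]
    ring
  -- Step 2: rewrite LHS
  have hLHS : θ * binomExp n θ h
      = ∑ k ∈ Finset.range (n + 1),
          h k * (n.choose k : ℝ) * θ ^ (k + 1) * (1 - θ) ^ (n - k) := by
    rw [binomExp, Finset.mul_sum]
    exact Finset.sum_congr rfl fun k _ => by ring
  rw [hLHS, hRHS]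
  -- Step 3: difference vanishes
  have hzero : ∑ k ∈ Finset.range (n + 1),
      (-θ * (1 - θ) ^ n) * ((-1 : ℝ) ^ k * (n.choose k : ℝ) * h k) = 0 := by
    rw [← Finset.mul_sum]
    have : ∑ k ∈ Finset.range (n + 1), (-1 : ℝ) ^ k * (n.choose k : ℝ) * h k
        = ∑ k ∈ Finset.range (n + 1), (-1 : ℝ) ^ k * (n.choose k : ℝ)
            * (∑ r ∈ Finset.range n, w r * (k : ℝ) ^ r) := by
      refine Finset.sum_congr rfl fun k hk => ?_
      simp only [Finset.mem_range] at hk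
      rw [hh k (by omega)]
    rw [this, alt_sum_poly n w, mul_zero]
  have hsplit : ∀ k ∈ Finset.range (n + 1),
      h k * (n.choose k : ℝ) * (1 - θ) ^ (n - k)
          * (θ ^ (k + 1) - (θ - 1) ^ (k + 1) - (θ - 1) ^ k)
        = h k * (n.choose k : ℝ) * θ ^ (k + 1) * (1 - θ) ^ (n - k)
          + (-θ * (1 - θ) ^ n) * ((-1 : ℝ) ^ k * (n.choose k : ℝ) * h k) := by
    intro k hk
    simp only [Finset.mem_range] at hk
    have hp : (1 - θ) ^ (n - k) * (1 - θ) ^ k = (1 - θ) ^ n := by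
      rw [← pow_add]; congr 1; omega
    have hneg : (θ - 1 : ℝ) ^ k = (-1 : ℝ) ^ k * (1 - θ) ^ k := by
      rw [← mul_pow]; congr 1; ring
    rw [← hp, pow_succ (θ - 1), hneg]
    ring
  rw [Finset.sum_congr rfl hsplit, Finset.sum_add_distrib, hzero, add_zero]
end

section
/- Fix an integer n ≥ 1, a function h : {0,…,n} → ℝ, and an integer y with 0 < y < n. Define T₁h(y) := Σ_{j=0}^{n−y} h(y+j)(−1)^j [(n−y)!/(n−y−j)!][y!/(y+j)!] and T₂h(y) := h(y) − Σ_{j=0}^{y} h(y−j)(−1)^j [y!/(y−j)!][(n−y)!/(n−y+j)!]. Then T₁h(y) − T₂h(y) = (−1)^y · C(n,y)^{−1} · Δh, where Δh := Σ_{j=0}^{n} h(j)(−1)^j C(n,j). Moreover T₁h and T₂h (with the indicator conventions T₁h(0) = 0 and T₂h(n) = h(n)) agree at y = 0 and y = n. -/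
/-- The transform `T₂h` (with the indicator convention `T₂h(n) = h(n)`). -/
noncomputable def T2 (n : ℕ) (h : ℕ → ℝ) (y : ℕ) : ℝ :=
  h y - (if y < n then
    ∑ j ∈ Finset.range (y + 1),
      h (y - j) * (-1 : ℝ) ^ j * ((y.factorial : ℝ) / ((y - j).factorial : ℝ))
        * (((n - y).factorial : ℝ) / ((n - y + j).factorial : ℝ))
  else 0)

lemma key (n y k : ℕ) (hy : y ≤ n) (hk : k ≤ n) :
    ((n.choose y : ℝ))⁻¹ * (n.choose k)
      = ((y.factorial : ℝ) * ((n - y).factorial : ℝ)) /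
        ((k.factorial : ℝ) * ((n - k).factorial : ℝ)) := by
  have h1 := Nat.choose_mul_factorial_mul_factorial hy
  have h2 := Nat.choose_mul_factorial_mul_factorial hk
  have hcy : (n.choose y : ℝ) ≠ 0 := Nat.cast_ne_zero.mpr (Nat.choose_pos hy).ne'
  have hk1 : (k.factorial : ℝ) ≠ 0 := Nat.cast_ne_zero.mpr k.factorial_ne_zero
  have hk2 : ((n-k).factorial : ℝ) ≠ 0 := Nat.cast_ne_zero.mpr (n-k).factorial_ne_zero
  have h3 : n.choose k * (k.factorial * (n-k).factorial)
      = n.choose y * (y.factorial * (n-y).factorial) := by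
    rw [← mul_assoc, ← mul_assoc, h1, h2]
  field_simp
  norm_cast
  linarith [h3]

lemma sign (y j : ℕ) : (-1 : ℝ) ^ y * (-1 : ℝ) ^ (y + j) = (-1 : ℝ) ^ j := by
  rw [← pow_add, show y + (y + j) = 2 * y + j by ring, pow_add, pow_mul]
  norm_num

/-- For `0 < y < n`: `T₁h(y) − T₂h(y) = (−1)^y·C(n,y)⁻¹·Δh`, and moreover the two
transforms agree at `y = 0` and `y = n`. -/
theorem T1_sub_T2 (n y : ℕ) (hn : 1 ≤ n) (h : ℕ → ℝ) (hy0 : 0 < y) (hyn : y < n) :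
    (T1 n h y - T2 n h y = (-1 : ℝ) ^ y * ((n.choose y : ℝ))⁻¹ * deltaH n h)
    ∧ T1 n h 0 = T2 n h 0 ∧ T1 n h n = T2 n h n := by
  have hyn' : y ≤ n := hyn.le
  have hcy : (n.choose y : ℝ) ≠ 0 := Nat.cast_ne_zero.mpr (Nat.choose_pos hyn').ne'
  set g : ℕ → ℝ := fun k => h k * (-1 : ℝ) ^ k * (n.choose k : ℝ) with hg
  refine ⟨?_, ?_, ?_⟩
  · have hT1 : T1 n h y
        = ∑ k ∈ Finset.Ico y (n + 1), (-1 : ℝ) ^ y * ((n.choose y : ℝ))⁻¹ * g k := by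
      rw [T1, if_pos hy0, Finset.sum_Ico_eq_sum_range,
        show n + 1 - y = n - y + 1 from by omega]
      refine Finset.sum_congr rfl fun j hj => ?_
      simp only [Finset.mem_range] at hj
      have hjn : y + j ≤ n := by omega
      have hk := key n y (y + j) hyn' hjn
      rw [show n - (y + j) = n - y - j from by omega] at hk
      simp only [hg]
      rw [show (-1:ℝ)^y * ((n.choose y : ℝ))⁻¹ *
          (h (y+j) * (-1:ℝ)^(y+j) * (n.choose (y+j) : ℝ))
          = h (y+j) * ((-1:ℝ)^y * (-1:ℝ)^(y+j)) *
            (((n.choose y : ℝ))⁻¹ * (n.choose (y+j) : ℝ)) from by ring,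
        sign, hk]
      ring
    have hS2 : (∑ j ∈ Finset.range (y + 1),
          h (y - j) * (-1 : ℝ) ^ j * ((y.factorial : ℝ) / ((y - j).factorial : ℝ))
            * (((n - y).factorial : ℝ) / ((n - y + j).factorial : ℝ)))
        = ∑ k ∈ Finset.range (y + 1), (-1 : ℝ) ^ y * ((n.choose y : ℝ))⁻¹ * g k := by
      rw [← Finset.sum_range_reflect (fun k => (-1 : ℝ) ^ y * ((n.choose y : ℝ))⁻¹ * g k) (y+1)]
      refine Finset.sum_congr rfl fun j hj => ?_
      simp only [Finset.mem_range] at hj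
      have hj' : j ≤ y := by omega
      rw [show y + 1 - 1 - j = y - j from by omega]
      have hkn : y - j ≤ n := by omega
      have hk := key n y (y - j) hyn' hkn
      rw [show n - (y - j) = n - y + j from by omega] at hk
      simp only [hg]
      have hsign : (-1 : ℝ) ^ y * (-1 : ℝ) ^ (y - j) = (-1 : ℝ) ^ j := by
        rw [← pow_add, show y + (y - j) = 2 * (y - j) + j from by omega,
          pow_add, pow_mul]
        norm_num
      rw [show (-1:ℝ)^y * ((n.choose y : ℝ))⁻¹ *
          (h (y-j) * (-1:ℝ)^(y-j) * (n.choose (y-j) : ℝ))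
          = h (y-j) * ((-1:ℝ)^y * (-1:ℝ)^(y-j)) *
            (((n.choose y : ℝ))⁻¹ * (n.choose (y-j) : ℝ)) from by ring,
        hsign, hk]
      ring
    have hgy : (-1 : ℝ) ^ y * ((n.choose y : ℝ))⁻¹ * g y = h y := by
      simp only [hg]
      rw [show (-1:ℝ)^y * ((n.choose y : ℝ))⁻¹ * (h y * (-1:ℝ)^y * (n.choose y : ℝ))
          = h y * ((-1:ℝ)^y * (-1:ℝ)^y) * (((n.choose y : ℝ))⁻¹ * (n.choose y : ℝ)) from by ring,
        ← pow_add, ← two_mul, pow_mul, inv_mul_cancel₀ hcy]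
      norm_num
    rw [T2, if_pos hyn, hT1, hS2]
    have hsplit : (∑ k ∈ Finset.Ico y (n + 1), (-1 : ℝ) ^ y * ((n.choose y : ℝ))⁻¹ * g k)
        + (∑ k ∈ Finset.range (y + 1), (-1 : ℝ) ^ y * ((n.choose y : ℝ))⁻¹ * g k)
        = (∑ k ∈ Finset.range (n + 1), (-1 : ℝ) ^ y * ((n.choose y : ℝ))⁻¹ * g k)
          + (-1 : ℝ) ^ y * ((n.choose y : ℝ))⁻¹ * g y := by
      rw [Finset.range_eq_Ico, Finset.range_eq_Ico,
        ← Finset.sum_Ico_consecutive _ (by omega : 0 ≤ y + 1) (by omega : y + 1 ≤ n + 1),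
        Finset.sum_eq_sum_Ico_succ_bot (by omega : y < n + 1)]
      ring
    have : deltaH n h = ∑ k ∈ Finset.range (n + 1), g k := rfl
    rw [this, Finset.mul_sum, mul_assoc] at *
    linarith [hsplit, hgy]
  · rw [T1, T2, if_neg (lt_irrefl 0), if_pos (by omega : 0 < n)]
    simp [Finset.sum_range_one, div_self (show ((n.factorial:ℝ)) ≠ 0 from Nat.cast_ne_zero.mpr n.factorial_ne_zero)]
  · rw [T1, T2, if_pos (by omega : 0 < n), if_neg (lt_irrefl n)]
    simp [Finset.sum_range_one, Nat.sub_self, div_self (show ((n.factorial:ℝ)) ≠ 0 from Nat.cast_ne_zero.mpr n.factorial_ne_zero)]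
end

section
/- Let n ≥ 1, θ ∈ [0,1], Y ~ Bin(n,θ), and define g : {1,…,n} → ℝ by g(y) := Σ_{j=0}^{n−y} h(y+j)·(−1)^j · [(n−y)!/(n−y−j)!]·[(y−1)!/(y+j)!], with g(0) := 0, for a given h : {0,…,n} → ℝ. Then for every y ∈ {0,1,…,n}: y·g(y) + (n−y)·g(y+1) = h(y) − Δh·1{y = 0}, where Δh := Σ_{j=0}^{n} h(j)(−1)^j C(n,j) (and the term (n−y)g(y+1) is interpreted as 0 when y = n). -/
/-- The auxiliary function `g` of the telescoping identity: `g(0) = 0` and for `y ≥ 1`,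
`g(y) = Σ_{j=0}^{n−y} h(y+j)(−1)^j [(n−y)!/(n−y−j)!][(y−1)!/(y+j)!]`. -/
noncomputable def gAux (n : ℕ) (h : ℕ → ℝ) (y : ℕ) : ℝ :=
  if 0 < y then
    ∑ j ∈ Finset.range (n - y + 1),
      h (y + j) * (-1 : ℝ) ^ j * (((n - y).factorial : ℝ) / ((n - y - j).factorial : ℝ))
        * (((y - 1).factorial : ℝ) / ((y + j).factorial : ℝ))
  else 0

/-- Telescoping identity: for every `y ∈ {0,…,n}`,
`y·g(y) + (n−y)·g(y+1) = h(y) − Δh·1{y = 0}`. -/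
theorem gAux_telescope (n : ℕ) (hn : 1 ≤ n) (h : ℕ → ℝ) (y : ℕ) (hy : y ≤ n) :
    (y : ℝ) * gAux n h y + ((n : ℝ) - (y : ℝ)) * gAux n h (y + 1)
      = h y - deltaH n h * (if y = 0 then 1 else 0) := by
  rcases Nat.eq_zero_or_pos y with rfl | hy0
  · -- y = 0
    simp only [gAux, deltaH, if_pos Nat.one_pos, lt_irrefl, if_neg (lt_irrefl 0),
      Nat.cast_zero, zero_mul, zero_add, sub_zero, if_pos rfl, mul_one]
    have hrange : n - 1 + 1 = n := Nat.sub_add_cancel hn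
    rw [hrange, Finset.mul_sum, Finset.sum_range_succ']
    have hf0 : h 0 * (-1:ℝ)^0 * (n.choose 0 : ℝ) = h 0 := by simp
    rw [hf0]
    have : ∀ j ∈ Finset.range n,
        (n:ℝ) * (h (1 + j) * (-1:ℝ)^j * ((n-1).factorial / ((n-1-j).factorial : ℝ))
          * (((1-1:ℕ).factorial : ℝ) / ((1+j).factorial : ℝ)))
        = -(h (j+1) * (-1:ℝ)^(j+1) * (n.choose (j+1) : ℝ)) := by
      intro j hj
      simp only [Finset.mem_range] at hj
      have e1 : (n:ℝ) * ((n-1).factorial : ℝ) = (n.factorial : ℝ) := by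
        exact_mod_cast Nat.mul_factorial_pred (Nat.pos_iff_ne_zero.mp hn)
      have e2 : n - 1 - j = n - (j+1) := by omega
      have e3 : 1 + j = j + 1 := by omega
      have e4 : ((n.choose (j+1)) : ℝ) = (n.factorial : ℝ) /
          (((j+1).factorial : ℝ) * ((n-(j+1)).factorial : ℝ)) := Nat.cast_choose ℝ (by omega)
      rw [e2, e3, e4, ← e1, pow_succ]
      have h1 : (((n-(j+1)).factorial : ℝ)) ≠ 0 := Nat.cast_ne_zero.2 (Nat.factorial_ne_zero _)
      have h2 : (((j+1).factorial : ℝ)) ≠ 0 := Nat.cast_ne_zero.2 (Nat.factorial_ne_zero _)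
      field_simp
      ring
    rw [Finset.sum_congr rfl this, Finset.sum_neg_distrib, if_pos trivial]
    ring
  · -- y ≥ 1
    simp only [gAux, if_pos hy0, if_pos (Nat.succ_pos y), if_neg (Nat.pos_iff_ne_zero.mp hy0),
      mul_zero, sub_zero]
    set m := n - y with hm
    have hcast : ((n:ℝ) - (y:ℝ)) = (m:ℝ) := by rw [hm, Nat.cast_sub hy]
    set T : ℕ → ℝ := fun j => h (y+j) * (-1:ℝ)^j * ((m.factorial : ℝ) / ((m-j).factorial : ℝ))
        * ((y.factorial : ℝ) / ((y+j).factorial : ℝ)) with hT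
    have eyfac : (y:ℝ) * ((y-1).factorial : ℝ) = (y.factorial : ℝ) := by
      exact_mod_cast Nat.mul_factorial_pred (Nat.pos_iff_ne_zero.mp hy0)
    have hA : (y:ℝ) * ∑ j ∈ Finset.range (m + 1),
        h (y + j) * (-1:ℝ)^j * ((m.factorial : ℝ) / ((m-j).factorial : ℝ))
          * (((y-1).factorial : ℝ) / ((y+j).factorial : ℝ))
        = ∑ j ∈ Finset.range (m + 1), T j := by
      rw [Finset.mul_sum]
      refine Finset.sum_congr rfl fun j _ => ?_
      rw [hT, ← eyfac]; ring
    rw [hA]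
    rcases Nat.eq_or_lt_of_le hy with rfl | hlt
    · -- y = n, m = 0
      have hm0 : m = 0 := by omega
      rw [hcast, hm0]
      simp only [Nat.cast_zero, zero_mul, add_zero]
      rw [Finset.sum_range_one, hT]
      have hfac : ∀ k : ℕ, ((k.factorial : ℝ)) ≠ 0 := fun k => Nat.cast_ne_zero.2 (Nat.factorial_ne_zero _)
      simp [div_self (hfac m), div_self (hfac y)]
    · -- y < n
      have hm1 : 1 ≤ m := by omega
      have hr : n - (y + 1) + 1 = m := by omega
      rw [hr, Finset.mul_sum]
      have hB : ∀ j ∈ Finset.range m,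
          ((n:ℝ) - (y:ℝ)) * (h (y + 1 + j) * (-1:ℝ)^j
            * (((n-(y+1)).factorial : ℝ) / ((n-(y+1)-j).factorial : ℝ))
            * (((y+1-1).factorial : ℝ) / ((y+1+j).factorial : ℝ)))
          = -(T (j+1)) := by
        intro j hj
        simp only [Finset.mem_range] at hj
        have e1 : (m:ℝ) * ((m-1).factorial : ℝ) = (m.factorial : ℝ) := by
          exact_mod_cast Nat.mul_factorial_pred (Nat.pos_iff_ne_zero.mp hm1)
        have e2 : n - (y+1) = m - 1 := by omega
        have e3 : n - (y+1) - j = m - (j+1) := by omega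
        have e4 : y + 1 - 1 = y := by omega
        have e5 : y + 1 + j = y + (j+1) := by omega
        rw [hcast, e3, e2, e4, e5]
        simp only [hT, pow_succ]
        rw [← e1]
        ring
      rw [Finset.sum_congr rfl hB, Finset.sum_range_succ']
      have hT0 : T 0 = h y := by
        have hfac : ∀ k : ℕ, ((k.factorial : ℝ)) ≠ 0 := fun k => Nat.cast_ne_zero.2 (Nat.factorial_ne_zero _)
        rw [hT]; simp [div_self (hfac m), div_self (hfac y)]
      rw [hT0, Finset.sum_neg_distrib]
      ring
end

section
/- Let n ≥ 1, 1 ≤ m < n, and θ ∈ [0,1]. Let Y ~ Bin(n, θ), and conditionally on Y, let Y⁽¹⁾ be hypergeometric: P(Y⁽¹⁾ = k | Y = y) = C(y, k)·C(n − y, m − k) / C(n, m). Set Y⁽²⁾ := Y − Y⁽¹⁾. Then marginally Y⁽¹⁾ ~ Bin(m, θ), Y⁽²⁾ ~ Bin(n − m, θ), and Y⁽¹⁾ and Y⁽²⁾ are independent. -/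
/-- Binomial pmf at `k` for `Bin(n, θ)`. -/
noncomputable def binomPMF (n : ℕ) (θ : ℝ) (k : ℕ) : ℝ :=
  (n.choose k : ℝ) * θ ^ k * (1 - θ) ^ (n - k)

/-- Joint pmf of `(Y⁽¹⁾, Y⁽²⁾)` under data thinning of `Y ~ Bin(n, θ)` with a
hypergeometric split of parameter `m`:
`P(Y⁽¹⁾=k₁, Y⁽²⁾=k₂) = P(Y = k₁+k₂)·C(k₁+k₂,k₁)·C(n−k₁−k₂, m−k₁)/C(n,m)`. -/
noncomputable def thinJoint (n m : ℕ) (θ : ℝ) (k₁ k₂ : ℕ) : ℝ :=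
  binomPMF n θ (k₁ + k₂) *
    (((k₁ + k₂).choose k₁ : ℝ) * ((n - (k₁ + k₂)).choose (m - k₁) : ℝ) / (n.choose m : ℝ))

lemma choose_swap {N a b : ℕ} (h : a + b ≤ N) :
    N.choose a * (N - a).choose b = N.choose b * (N - b).choose a := by
  have h1 := Nat.choose_mul (n := N) (k := a + b) (s := a) (Nat.le_add_right a b)
  have h2 := Nat.choose_mul (n := N) (k := a + b) (s := b) (Nat.le_add_left b a)
  have hsym : (a + b).choose a = (a + b).choose b := by
    rw [← Nat.choose_symm (Nat.le_add_left b a)]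
    simp
  simp only [Nat.add_sub_cancel_left, Nat.add_sub_cancel] at h1 h2
  rw [← h1, ← h2, hsym]

lemma key_nat (n m k₁ k₂ : ℕ) (hk₁ : k₁ ≤ m) (hk₂ : k₂ ≤ n - m) (hmn : m ≤ n) :
    n.choose (k₁ + k₂) * (k₁ + k₂).choose k₁ * (n - (k₁ + k₂)).choose (m - k₁)
      = n.choose m * (m.choose k₁ * (n - m).choose k₂) := by
  have hsn : k₁ + k₂ ≤ n := by omega
  have h1 := Nat.choose_mul (n := n) (Nat.le_add_right k₁ k₂)
  rw [h1, Nat.add_sub_cancel_left]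
  have h2 := Nat.choose_mul (n := n) hk₁
  have : n.choose m * m.choose k₁ * (n - m).choose k₂
      = n.choose k₁ * ((n - k₁).choose (m - k₁) * (n - (m - k₁) - k₁).choose k₂) := by
    rw [h2]; ring_nf
    congr 2
    omega
  rw [mul_assoc, ← mul_assoc (n.choose m), this]
  congr 1
  have hswap := choose_swap (N := n - k₁) (a := k₂) (b := m - k₁) (by omega)
  have e1 : n - k₁ - k₂ = n - (k₁ + k₂) := by omega
  have e2 : n - k₁ - (m - k₁) = n - (m - k₁) - k₁ := by omega
  rw [e1] at hswap
  rw [hswap, e2]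

lemma binom_sum (N : ℕ) (θ : ℝ) :
    ∑ k ∈ Finset.range (N + 1), binomPMF N θ k = 1 := by
  have h := add_pow θ (1 - θ) N
  simp only [add_sub_cancel, one_pow] at h
  have : ∑ k ∈ Finset.range (N + 1), binomPMF N θ k
      = ∑ k ∈ Finset.range (N + 1), θ ^ k * (1 - θ) ^ (N - k) * (N.choose k : ℝ) := by
    apply Finset.sum_congr rfl
    intro k _
    simp [binomPMF]
    ring
  rw [this, ← h]

lemma thin_prod (n m : ℕ) (hmn : m ≤ n) (θ : ℝ) (k₁ k₂ : ℕ) (hk₁ : k₁ ≤ m)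
    (hk₂ : k₂ ≤ n - m) :
    thinJoint n m θ k₁ k₂ = binomPMF m θ k₁ * binomPMF (n - m) θ k₂ := by
  have hc : (n.choose m : ℝ) ≠ 0 := by
    have := Nat.choose_pos hmn
    positivity
  have hkey := key_nat n m k₁ k₂ hk₁ hk₂ hmn
  have hkey' : (n.choose (k₁ + k₂) : ℝ) * ((k₁ + k₂).choose k₁ : ℝ)
      * ((n - (k₁ + k₂)).choose (m - k₁) : ℝ)
      = (n.choose m : ℝ) * ((m.choose k₁ : ℝ) * ((n - m).choose k₂ : ℝ)) := by
    exact_mod_cast hkey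
  have hθpow : θ ^ (k₁ + k₂) = θ ^ k₁ * θ ^ k₂ := pow_add θ k₁ k₂
  have hsub : n - (k₁ + k₂) = (m - k₁) + ((n - m) - k₂) := by omega
  have h1θ : (1 - θ) ^ (n - (k₁ + k₂))
      = (1 - θ) ^ (m - k₁) * (1 - θ) ^ ((n - m) - k₂) := by
    rw [hsub, pow_add]
  unfold thinJoint binomPMF
  rw [hθpow, h1θ]
  field_simp
  linear_combination (θ ^ k₁ * θ ^ k₂ * (1 - θ) ^ (m - k₁) * (1 - θ) ^ ((n - m) - k₂)) * hkey'

/-- Data thinning: the hypergeometric split of `Y ~ Bin(n, θ)` produces marginals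
`Y⁽¹⁾ ~ Bin(m, θ)`, `Y⁽²⁾ ~ Bin(n−m, θ)`, and the two pieces are independent. -/
theorem data_thinning (n m : ℕ) (hm : 1 ≤ m) (hmn : m < n)
    (θ : ℝ) (hθ : θ ∈ Set.Icc (0 : ℝ) 1) :
    (∀ k₁ ≤ m, ∑ k₂ ∈ Finset.range (n - m + 1), thinJoint n m θ k₁ k₂
        = binomPMF m θ k₁)
    ∧ (∀ k₂ ≤ n - m, ∑ k₁ ∈ Finset.range (m + 1), thinJoint n m θ k₁ k₂
        = binomPMF (n - m) θ k₂)
    ∧ (∀ k₁ ≤ m, ∀ k₂ ≤ n - m,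
        thinJoint n m θ k₁ k₂ = binomPMF m θ k₁ * binomPMF (n - m) θ k₂) := by
  have hmn' : m ≤ n := hmn.le
  refine ⟨?_, ?_, fun k₁ h1 k₂ h2 => thin_prod n m hmn' θ k₁ k₂ h1 h2⟩
  · intro k₁ h1
    calc ∑ k₂ ∈ Finset.range (n - m + 1), thinJoint n m θ k₁ k₂
        = ∑ k₂ ∈ Finset.range (n - m + 1), binomPMF m θ k₁ * binomPMF (n - m) θ k₂ := by
          apply Finset.sum_congr rfl; intro k₂ hk₂
          exact thin_prod n m hmn' θ k₁ k₂ h1 (Nat.lt_succ_iff.mp (Finset.mem_range.mp hk₂))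
      _ = binomPMF m θ k₁ * ∑ k₂ ∈ Finset.range (n - m + 1), binomPMF (n - m) θ k₂ := by
          rw [Finset.mul_sum]
      _ = binomPMF m θ k₁ := by rw [binom_sum]; ring
  · intro k₂ h2
    calc ∑ k₁ ∈ Finset.range (m + 1), thinJoint n m θ k₁ k₂
        = ∑ k₁ ∈ Finset.range (m + 1), binomPMF m θ k₁ * binomPMF (n - m) θ k₂ := by
          apply Finset.sum_congr rfl; intro k₁ hk₁
          exact thin_prod n m hmn' θ k₁ k₂ (Nat.lt_succ_iff.mp (Finset.mem_range.mp hk₁)) h2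
      _ = (∑ k₁ ∈ Finset.range (m + 1), binomPMF m θ k₁) * binomPMF (n - m) θ k₂ := by
          rw [Finset.sum_mul]
      _ = binomPMF (n - m) θ k₂ := by rw [binom_sum]; ring
end

section
/- Fix an integer n ≥ 2 and real numbers Ȳ ∈ ℝ. For Y ∈ {0,…,n} define κ(Y) := 2[Ȳ − 1{Y ≤ ⌊n/2⌋}] − 2·1{Y > ⌊n/2⌋}·Σ_{j=0}^{n−Y} (−1)^j [(n−Y)!/(n−Y−j)!][Y!/(Y+j)!] + 2·1{Y ≤ ⌊n/2⌋}·Σ_{j=0}^{Y} (−1)^j [Y!/(Y−j)!][(n−Y)!/(n−Y+j)!]. Then κ(Y) = 2(Ȳ − Y/n) for every Y ∈ {0,…,n}. -/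
lemma altsum (a : ℕ) : ∀ b : ℕ, 1 ≤ b →
    ∑ j ∈ Finset.range (a+1), (-1:ℝ)^j * ((a+b).choose (b+j) : ℝ)
      = ((a+b-1).choose (b-1) : ℝ) := by
  induction a with
  | zero => intro b hb; simp
  | succ a ih =>
    intro b hb
    rw [Finset.sum_range_succ']
    have h := ih (b+1) (by omega)
    have e1 : a + (b+1) = a + 1 + b := by omega
    rw [e1] at h
    simp only [Nat.add_sub_cancel] at h
    have hshift : ∑ j ∈ Finset.range (a+1), (-1:ℝ)^(j+1) * ((a+1+b).choose (b+(j+1)) : ℝ)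
        = -((a+1+b-1).choose b : ℝ) := by
      rw [← h, ← Finset.sum_neg_distrib]
      apply Finset.sum_congr rfl
      intro j hj
      have : b + (j+1) = b + 1 + j := by omega
      rw [this]; ring
    rw [hshift]
    simp only [pow_zero, one_mul, add_zero]
    have hpas : (a+b+1).choose (b-1+1) = (a+b).choose (b-1) + (a+b).choose (b-1+1) :=
      Nat.choose_succ_succ _ _
    have e5 : b - 1 + 1 = b := by omega
    rw [e5] at hpas
    have hpas' : ((a+b+1).choose b : ℝ) = ((a+b).choose (b-1) : ℝ) + ((a+b).choose b : ℝ) := by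
      exact_mod_cast congrArg (Nat.cast : ℕ → ℝ) hpas
    have e3 : a + 1 + b - 1 = a + b := by omega
    have e4 : a + 1 + b = a + b + 1 := by omega
    rw [e3, e4]
    linarith [hpas']

lemma key_s17 (a b : ℕ) (hb : 1 ≤ b) :
    ∑ j ∈ Finset.range (a+1),
      (-1:ℝ)^j * ((a.factorial : ℝ) / ((a-j).factorial : ℝ))
        * ((b.factorial : ℝ) / ((b+j).factorial : ℝ))
      = (b : ℝ) / ((a+b : ℕ) : ℝ) := by
  have hterm : ∀ j ∈ Finset.range (a+1),
      (-1:ℝ)^j * ((a.factorial : ℝ) / ((a-j).factorial : ℝ))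
        * ((b.factorial : ℝ) / ((b+j).factorial : ℝ))
      = ((a.factorial : ℝ) * b.factorial / (a+b).factorial) *
          ((-1:ℝ)^j * ((a+b).choose (b+j) : ℝ)) := by
    intro j hj
    have hj' : j ≤ a := by simpa using Nat.lt_succ_iff.mp (Finset.mem_range.mp hj)
    have hle : b + j ≤ a + b := by omega
    have hsub : a + b - (b + j) = a - j := by omega
    have hc := Nat.choose_mul_factorial_mul_factorial hle
    rw [hsub] at hc
    have hc' : ((a+b).choose (b+j) : ℝ) * ((b+j).factorial : ℝ) * ((a-j).factorial : ℝ)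
        = ((a+b).factorial : ℝ) := by exact_mod_cast congrArg (Nat.cast : ℕ → ℝ) hc
    have h1 : ((a-j).factorial : ℝ) ≠ 0 := Nat.cast_ne_zero.mpr (Nat.factorial_ne_zero _)
    have h2 : ((b+j).factorial : ℝ) ≠ 0 := Nat.cast_ne_zero.mpr (Nat.factorial_ne_zero _)
    have h3 : ((a+b).factorial : ℝ) ≠ 0 := Nat.cast_ne_zero.mpr (Nat.factorial_ne_zero _)
    field_simp
    linear_combination -hc'
  rw [Finset.sum_congr rfl hterm, ← Finset.mul_sum, altsum a b hb]
  have hle : b - 1 ≤ a + b - 1 := by omega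
  have hsub : a + b - 1 - (b - 1) = a := by omega
  have hc := Nat.choose_mul_factorial_mul_factorial hle
  rw [hsub] at hc
  have hc' : ((a+b-1).choose (b-1) : ℝ) * ((b-1).factorial : ℝ) * (a.factorial : ℝ)
      = ((a+b-1).factorial : ℝ) := by exact_mod_cast congrArg (Nat.cast : ℕ → ℝ) hc
  have hbf : (b.factorial : ℝ) = (b : ℝ) * ((b-1).factorial : ℝ) := by
    have h : b * (b-1).factorial = b.factorial := Nat.mul_factorial_pred (by omega)
    exact_mod_cast (congrArg (Nat.cast : ℕ → ℝ) h).symm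
  have hnf : ((a+b).factorial : ℝ) = ((a+b : ℕ) : ℝ) * ((a+b-1).factorial : ℝ) := by
    have h : (a+b) * (a+b-1).factorial = (a+b).factorial := Nat.mul_factorial_pred (by omega)
    exact_mod_cast (congrArg (Nat.cast : ℕ → ℝ) h).symm
  have h3 : ((a+b).factorial : ℝ) ≠ 0 := Nat.cast_ne_zero.mpr (Nat.factorial_ne_zero _)
  have hpos : 0 < a + b := by omega
  have hn0 : ((a+b : ℕ) : ℝ) ≠ 0 := by exact_mod_cast hpos.ne'
  field_simp
  rw [hbf, hnf]
  push_cast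
  linear_combination (((a:ℝ)+(b:ℝ)) * (b:ℝ)) * hc'

/-- Simplification of the SURE linear-coefficient weight: for every `Y ∈ {0,…,n}`,
`κ(Y) = 2(Ȳ − Y/n)`. -/
theorem kappa_simplification (n : ℕ) (hn : 2 ≤ n) (Ybar : ℝ) (Y : ℕ) (hY : Y ≤ n) :
    2 * (Ybar - (if Y ≤ n / 2 then 1 else 0))
      - 2 * (if n / 2 < Y then 1 else 0) *
          (∑ j ∈ Finset.range (n - Y + 1),
            (-1 : ℝ) ^ j * (((n - Y).factorial : ℝ) / ((n - Y - j).factorial : ℝ))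
              * ((Y.factorial : ℝ) / ((Y + j).factorial : ℝ)))
      + 2 * (if Y ≤ n / 2 then 1 else 0) *
          (∑ j ∈ Finset.range (Y + 1),
            (-1 : ℝ) ^ j * ((Y.factorial : ℝ) / ((Y - j).factorial : ℝ))
              * (((n - Y).factorial : ℝ) / ((n - Y + j).factorial : ℝ)))
    = 2 * (Ybar - (Y : ℝ) / (n : ℝ)) := by
  have hn0 : (n : ℝ) ≠ 0 := by positivity
  by_cases h : Y ≤ n / 2
  · have h2 : ¬ (n / 2 < Y) := by omega
    simp only [h, h2, if_true, if_false]
    have hb : 1 ≤ n - Y := by omega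
    have hk := key_s17 Y (n - Y) hb
    have hYn : Y + (n - Y) = n := by omega
    rw [hYn] at hk
    rw [hk]
    have hcast : ((n - Y : ℕ) : ℝ) = (n : ℝ) - (Y : ℝ) := by
      push_cast [hY]; ring
    rw [hcast]
    field_simp
    ring
  · have h2 : n / 2 < Y := by omega
    simp only [h, h2, if_true, if_false]
    have hb : 1 ≤ Y := by omega
    have hk := key_s17 (n - Y) Y hb
    have hYn : n - Y + Y = n := by omega
    rw [hYn] at hk
    rw [hk]
    ring
end
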